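/- Let n ≥ 1 and 0 < L < 1, and let Φ : ℝ → Sym(n, ℝ) be a map into the real symmetric n × n matrices that is L-Lipschitz in the operator norm, i.e. ‖Φ(θ) − Φ(θ')‖_op ≤ L|θ − θ'| for all θ, θ' ∈ ℝ. Then there exist real numbers θ₁, …, θ_n such that for every t > 0 and every θ ∈ ℝ with |θ − θ_i| ≥ t for all i = 1, …, n, the matrix −θ·I + Φ(θ) is invertible and ‖(−θ·I + Φ(θ))^{−1}‖_op ≤ 1/((1 − L) t). -/

import Mathlib

open Matrix

open scoped InnerProductSpace

variable {n : ℕ}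

noncomputable abbrev clm (A : Matrix (Fin n) (Fin n) ℝ) :
    EuclideanSpace ℝ (Fin n) →L[ℝ] EuclideanSpace ℝ (Fin n) :=
  Matrix.toEuclideanCLM (𝕜 := ℝ) A

lemma clm_eigen {A : Matrix (Fin n) (Fin n) ℝ} (hA : A.IsHermitian) (j : Fin n) :
    clm A (hA.eigenvectorBasis j) = hA.eigenvalues j • (hA.eigenvectorBasis j) := by
  have := hA.mulVec_eigenvectorBasis j
  apply (WithLp.equiv 2 _).injective
  simp only [WithLp.equiv_apply, ofLp_toEuclideanCLM]
  ext i
  simpa using congrFun this i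

lemma clm_selfAdj {A : Matrix (Fin n) (Fin n) ℝ} (hA : A.IsHermitian) :
    _root_.IsSelfAdjoint (clm A) := by
  rw [_root_.IsSelfAdjoint, ← map_star]
  exact congrArg _ hA

lemma clm_symm {A : Matrix (Fin n) (Fin n) ℝ} (hA : A.IsHermitian)
    (x y : EuclideanSpace ℝ (Fin n)) :
    ⟪clm A x, y⟫_ℝ = ⟪x, clm A y⟫_ℝ :=
  ((ContinuousLinearMap.isSelfAdjoint_iff_isSymmetric).mp (clm_selfAdj hA)) x y

lemma norm_sq_expand (b : OrthonormalBasis (Fin n) ℝ (EuclideanSpace ℝ (Fin n)))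
    (x : EuclideanSpace ℝ (Fin n)) :
    ‖x‖ ^ 2 = ∑ i, ⟪b i, x⟫_ℝ ^ 2 := by
  rw [← real_inner_self_eq_norm_sq, ← b.sum_inner_mul_inner x x]
  congr 1; ext i
  rw [real_inner_comm x (b i)]; ring

lemma qf_expand {A : Matrix (Fin n) (Fin n) ℝ} (hA : A.IsHermitian)
    (x : EuclideanSpace ℝ (Fin n)) :
    ⟪x, clm A x⟫_ℝ = ∑ i, hA.eigenvalues i * ⟪hA.eigenvectorBasis i, x⟫_ℝ ^ 2 := by
  rw [← (hA.eigenvectorBasis).sum_inner_mul_inner x (clm A x)]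
  congr 1; ext i
  rw [← clm_symm hA, clm_eigen hA i, inner_smul_left, real_inner_comm x]
  simp; ring

lemma coeff_zero {S : Set (Fin n)} (b : OrthonormalBasis (Fin n) ℝ (EuclideanSpace ℝ (Fin n)))
    {x : EuclideanSpace ℝ (Fin n)} (hx : x ∈ Submodule.span ℝ (b '' S))
    {i : Fin n} (hi : i ∉ S) : ⟪b i, x⟫_ℝ = 0 := by
  induction hx using Submodule.span_induction with
  | mem y hy =>
      obtain ⟨j, hj, rfl⟩ := hy
      have := b.orthonormal
      rw [orthonormal_iff_ite] at this
      rw [this]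
      simp only [ite_eq_right_iff]
      intro h; exact absurd (h ▸ hj) hi
  | zero => simp
  | add y z _ _ hy hz => rw [inner_add_right, hy, hz, add_zero]
  | smul a y _ hy => rw [inner_smul_right, hy, mul_zero]

lemma qf_le {A : Matrix (Fin n) (Fin n) ℝ} (hA : A.IsHermitian) {S : Finset (Fin n)} {c : ℝ}
    (h : ∀ i ∈ S, hA.eigenvalues i ≤ c) {x : EuclideanSpace ℝ (Fin n)}
    (hx : x ∈ Submodule.span ℝ (hA.eigenvectorBasis '' ↑S)) :
    ⟪x, clm A x⟫_ℝ ≤ c * ‖x‖ ^ 2 := by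
  rw [qf_expand hA, norm_sq_expand hA.eigenvectorBasis, Finset.mul_sum]
  apply Finset.sum_le_sum
  intro i _
  by_cases hi : i ∈ S
  · exact mul_le_mul_of_nonneg_right (h i hi) (sq_nonneg _)
  · rw [coeff_zero _ hx hi]; simp

lemma qf_ge {A : Matrix (Fin n) (Fin n) ℝ} (hA : A.IsHermitian) {S : Finset (Fin n)} {c : ℝ}
    (h : ∀ i ∈ S, c ≤ hA.eigenvalues i) {x : EuclideanSpace ℝ (Fin n)}
    (hx : x ∈ Submodule.span ℝ (hA.eigenvectorBasis '' ↑S)) :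
    c * ‖x‖ ^ 2 ≤ ⟪x, clm A x⟫_ℝ := by
  rw [qf_expand hA, norm_sq_expand hA.eigenvectorBasis, Finset.mul_sum]
  apply Finset.sum_le_sum
  intro i _
  by_cases hi : i ∈ S
  · exact mul_le_mul_of_nonneg_right (h i hi) (sq_nonneg _)
  · rw [coeff_zero _ hx hi]; simp

lemma span_finrank (b : OrthonormalBasis (Fin n) ℝ (EuclideanSpace ℝ (Fin n)))
    (S : Finset (Fin n)) :
    Module.finrank ℝ (Submodule.span ℝ (⇑b '' ↑S)) = S.card := by
  have hli : LinearIndependent ℝ (fun i : S => b i) :=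
    (b.orthonormal.linearIndependent).comp Subtype.val Subtype.val_injective
  have hr : Set.range (fun i : S => b i) = ⇑b '' ↑S := by
    ext y; simp [Set.mem_image]
  rw [← hr, finrank_span_eq_card hli]
  simp

noncomputable def seig {A : Matrix (Fin n) (Fin n) ℝ} (hA : A.IsHermitian) : Fin n → ℝ :=
  hA.eigenvalues ∘ Tuple.sort hA.eigenvalues

lemma seig_mono {A : Matrix (Fin n) (Fin n) ℝ} (hA : A.IsHermitian) : Monotone (seig hA) :=
  Tuple.monotone_sort _

lemma card_test (k : Fin n) : (Finset.Iic k).card = (k : ℕ) + 1 ∧ (Finset.Ici k).card = n - k :=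
  ⟨Fin.card_Iic k, Fin.card_Ici k⟩

lemma exists_ne_zero_inf (V W : Submodule ℝ (EuclideanSpace ℝ (Fin n)))
    (h : n < Module.finrank ℝ V + Module.finrank ℝ W) :
    ∃ x, x ∈ V ⊓ W ∧ x ≠ 0 := by
  have hsum := Submodule.finrank_sup_add_finrank_inf_eq V W
  have hle : Module.finrank ℝ ↥(V ⊔ W) ≤ n := by
    have := Submodule.finrank_le (V ⊔ W)
    simpa [finrank_euclideanSpace] using this
  have hpos : 0 < Module.finrank ℝ (V ⊓ W : Submodule ℝ _) := by omega
  have : (V ⊓ W) ≠ ⊥ := by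
    intro hb
    rw [hb, finrank_bot] at hpos
    exact lt_irrefl _ hpos
  exact Submodule.exists_mem_ne_zero_of_ne_bot this

lemma weyl_le {A B : Matrix (Fin n) (Fin n) ℝ} (hA : A.IsHermitian) (hB : B.IsHermitian)
    (k : Fin n) : seig hB k ≤ seig hA k + ‖clm (B - A)‖ := by
  set σA := Tuple.sort hA.eigenvalues with hσA
  set σB := Tuple.sort hB.eigenvalues with hσB
  set V := Submodule.span ℝ (⇑hA.eigenvectorBasis '' ↑(Finset.image ⇑σA (Finset.Iic k))) with hV
  set W := Submodule.span ℝ (⇑hB.eigenvectorBasis '' ↑(Finset.image ⇑σB (Finset.Ici k))) with hW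
  have hdim : n < Module.finrank ℝ V + Module.finrank ℝ W := by
    rw [hV, hW, span_finrank, span_finrank,
      Finset.card_image_of_injective _ σA.injective,
      Finset.card_image_of_injective _ σB.injective, Fin.card_Iic, Fin.card_Ici]
    have := k.isLt
    omega
  obtain ⟨x, hx, hne⟩ := exists_ne_zero_inf V W hdim
  have hx2 : (0 : ℝ) < ‖x‖ ^ 2 := by
    have : 0 < ‖x‖ := norm_pos_iff.mpr hne
    positivity
  have hup : ⟪x, clm A x⟫_ℝ ≤ seig hA k * ‖x‖ ^ 2 := by
    apply qf_le hA _ hx.1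
    intro i hi
    obtain ⟨j, hj, rfl⟩ := Finset.mem_image.mp hi
    exact seig_mono hA (Finset.mem_Iic.mp hj)
  have hlo : seig hB k * ‖x‖ ^ 2 ≤ ⟪x, clm B x⟫_ℝ := by
    apply qf_ge hB _ hx.2
    intro i hi
    obtain ⟨j, hj, rfl⟩ := Finset.mem_image.mp hi
    exact seig_mono hB (Finset.mem_Ici.mp hj)
  have hpert : ⟪x, clm B x⟫_ℝ - ⟪x, clm A x⟫_ℝ ≤ ‖clm (B - A)‖ * ‖x‖ ^ 2 := by
    have h1 : ⟪x, clm B x⟫_ℝ - ⟪x, clm A x⟫_ℝ = ⟪x, clm (B - A) x⟫_ℝ := by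
      have : clm (B - A) = clm B - clm A := map_sub _ _ _
      rw [this]
      simp [inner_sub_right]
    rw [h1]
    calc ⟪x, clm (B - A) x⟫_ℝ ≤ ‖x‖ * ‖clm (B - A) x‖ := real_inner_le_norm _ _
      _ ≤ ‖x‖ * (‖clm (B - A)‖ * ‖x‖) :=
          mul_le_mul_of_nonneg_left ((clm (B - A)).le_opNorm x) (norm_nonneg x)
      _ = ‖clm (B - A)‖ * ‖x‖ ^ 2 := by ring
  nlinarith [hx2]

lemma isHerm_of_isSymm {A : Matrix (Fin n) (Fin n) ℝ} (h : A.IsSymm) : A.IsHermitian := by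
  rwa [Matrix.IsHermitian, Matrix.conjTranspose_eq_transpose_of_trivial]

example (b : OrthonormalBasis (Fin n) ℝ (EuclideanSpace ℝ (Fin n))) (i : Fin n) : ‖b i‖ = 1 :=
  b.orthonormal.1 i

lemma weyl_abs {A B : Matrix (Fin n) (Fin n) ℝ} (hA : A.IsHermitian) (hB : B.IsHermitian)
    (k : Fin n) : |seig hA k - seig hB k| ≤ ‖clm (A - B)‖ := by
  rw [abs_sub_le_iff]
  have h1 := weyl_le hB hA k
  have h2 := weyl_le hA hB k
  have : ‖clm (B - A)‖ = ‖clm (A - B)‖ := by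
    have : clm (B - A) = -(clm (A - B)) := by
      rw [← map_neg, neg_sub]
    rw [this, norm_neg]
  constructor <;> linarith

lemma resolvent_bound {A : Matrix (Fin n) (Fin n) ℝ} (hA : A.IsHermitian) (θ δ : ℝ)
    (hδ : 0 < δ) (h : ∀ j, δ ≤ |hA.eigenvalues j - θ|) :
    IsUnit ((-θ) • (1 : Matrix (Fin n) (Fin n) ℝ) + A) ∧
    ‖clm (((-θ) • (1 : Matrix (Fin n) (Fin n) ℝ) + A)⁻¹)‖ ≤ δ⁻¹ := by
  set M : Matrix (Fin n) (Fin n) ℝ := (-θ) • 1 + A with hMdef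
  have hM : M.IsHermitian := by
    rw [Matrix.IsHermitian, hMdef, Matrix.conjTranspose_add, Matrix.conjTranspose_smul]
    rw [Matrix.conjTranspose_one, hA]
    simp
  have hclmM : ∀ i, clm M (hA.eigenvectorBasis i)
      = (hA.eigenvalues i - θ) • hA.eigenvectorBasis i := by
    intro i
    have h1 : clm M = clm ((-θ) • (1 : Matrix (Fin n) (Fin n) ℝ)) + clm A := map_add _ _ _
    have h2 : clm ((-θ) • (1 : Matrix (Fin n) (Fin n) ℝ)) = (-θ) • (1 : _) := by
      rw [show clm ((-θ) • (1 : Matrix (Fin n) (Fin n) ℝ))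
          = (-θ) • clm (1 : Matrix (Fin n) (Fin n) ℝ) from _root_.map_smul _ _ _,
        show clm (1 : Matrix (Fin n) (Fin n) ℝ) = 1 from _root_.map_one _]
    rw [h1, h2, ContinuousLinearMap.add_apply, clm_eigen hA i]
    rw [ContinuousLinearMap.smul_apply, ContinuousLinearMap.one_apply]
    rw [sub_smul, neg_smul]
    abel
  have hlow : ∀ x : EuclideanSpace ℝ (Fin n), δ * ‖x‖ ≤ ‖clm M x‖ := by
    intro x
    have hsq : (δ * ‖x‖) ^ 2 ≤ ‖clm M x‖ ^ 2 := by
      rw [norm_sq_expand hA.eigenvectorBasis (clm M x), mul_pow,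
        norm_sq_expand hA.eigenvectorBasis x, Finset.mul_sum]
      apply Finset.sum_le_sum
      intro i _
      have hterm : ⟪hA.eigenvectorBasis i, clm M x⟫_ℝ
          = (hA.eigenvalues i - θ) * ⟪hA.eigenvectorBasis i, x⟫_ℝ := by
        rw [← clm_symm hM, hclmM i, real_inner_smul_left]
      rw [hterm, mul_pow]
      have : δ ^ 2 ≤ (hA.eigenvalues i - θ) ^ 2 := by
        have := h i
        nlinarith [abs_nonneg (hA.eigenvalues i - θ), sq_abs (hA.eigenvalues i - θ)]
      exact mul_le_mul_of_nonneg_right this (sq_nonneg _)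
    have h0 : (0:ℝ) ≤ ‖clm M x‖ := norm_nonneg _
    nlinarith [mul_nonneg hδ.le (norm_nonneg x)]
  have heig : ∀ i, hM.eigenvalues i ≠ 0 := by
    intro i h0
    have hv := clm_eigen hM i
    have h1 := hlow (hM.eigenvectorBasis i)
    rw [hv, h0] at h1
    have hn1 : ‖hM.eigenvectorBasis i‖ = 1 := hM.eigenvectorBasis.orthonormal.1 i
    rw [hn1] at h1
    simp at h1
    linarith
  have hdet : M.det ≠ 0 := by
    rw [hM.det_eq_prod_eigenvalues]
    exact Finset.prod_ne_zero_iff.mpr fun i _ => by exact_mod_cast heig i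
  have hu : IsUnit M := (Matrix.isUnit_iff_isUnit_det M).mpr hdet.isUnit
  refine ⟨hu, ?_⟩
  apply ContinuousLinearMap.opNorm_le_bound _ (by positivity)
  intro y
  have hid : clm M (clm M⁻¹ y) = y := by
    have h1 : clm M * clm M⁻¹ = 1 := by
      rw [← _root_.map_mul, Matrix.mul_nonsing_inv M hdet.isUnit]
      exact _root_.map_one _
    calc clm M (clm M⁻¹ y) = (clm M * clm M⁻¹) y := rfl
      _ = y := by rw [h1]; rfl
  have := hlow (clm M⁻¹ y)
  rw [hid] at this
  rw [← sub_nonneg] at this ⊢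
  calc (0:ℝ) ≤ δ⁻¹ * (‖y‖ - δ * ‖clm M⁻¹ y‖) := by positivity
    _ = δ⁻¹ * ‖y‖ - ‖clm M⁻¹ y‖ := by field_simp

/-- **Lipschitz eigenvalue-variation principle.** If `θ ↦ Φ(θ)` is an
`L`-Lipschitz (in operator norm) family of real symmetric `n × n` matrices with `L < 1`, then
there are `θ₁, …, θ_n` such that away from `t`-neighborhoods of the `θ_i`, the matrix
`−θ·I + Φ(θ)` is invertible with inverse of operator norm at most `1/((1 − L)t)`. -/
theorem stmt_14 (n : ℕ) (hn : 1 ≤ n) (L : ℝ) (hL0 : 0 < L) (hL1 : L < 1)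
    (Φ : ℝ → Matrix (Fin n) (Fin n) ℝ)
    (hsymm : ∀ θ, (Φ θ).IsSymm)
    (hlip : ∀ θ θ' : ℝ,
      ‖Matrix.toEuclideanCLM (𝕜 := ℝ) (Φ θ - Φ θ')‖ ≤ L * |θ - θ'|) :
    ∃ θs : Fin n → ℝ, ∀ t : ℝ, 0 < t → ∀ θ : ℝ, (∀ i, t ≤ |θ - θs i|) →
      IsUnit ((-θ) • (1 : Matrix (Fin n) (Fin n) ℝ) + Φ θ) ∧
      ‖Matrix.toEuclideanCLM (𝕜 := ℝ)
          (((-θ) • (1 : Matrix (Fin n) (Fin n) ℝ) + Φ θ)⁻¹)‖ ≤ 1 / ((1 - L) * t) := by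
  have hherm : ∀ θ, (Φ θ).IsHermitian := fun θ => isHerm_of_isSymm (hsymm θ)
  set g : Fin n → ℝ → ℝ := fun k θ => seig (hherm θ) k with hg
  have hglip : ∀ k (θ θ' : ℝ), |g k θ - g k θ'| ≤ L * |θ - θ'| := fun k θ θ' =>
    le_trans (weyl_abs (hherm θ) (hherm θ') k) (hlip θ θ')
  have hcontr : ∀ k, ContractingWith ⟨L, hL0.le⟩ (g k) := by
    intro k
    constructor
    · exact_mod_cast hL1
    · apply LipschitzWith.of_dist_le_mul
      intro x y
      rw [Real.dist_eq, Real.dist_eq]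
      exact hglip k x y
  refine ⟨fun k => ContractingWith.fixedPoint (g k) (hcontr k), ?_⟩
  intro t ht θ hfar
  have hδ : 0 < (1 - L) * t := by nlinarith
  have hkey : ∀ j, (1 - L) * t ≤ |(hherm θ).eigenvalues j - θ| := by
    intro j
    set σ := Tuple.sort (hherm θ).eigenvalues with hσ
    set k := σ⁻¹ j with hk
    set θk := ContractingWith.fixedPoint (g k) (hcontr k) with hθk
    have hj : (hherm θ).eigenvalues j = g k θ := by
      rw [hg]
      simp only [seig, Function.comp_apply, hk, ← hσ, Equiv.Perm.inv_def, Equiv.apply_symm_apply]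
    have h1 : |g k θ - g k θk| ≤ L * |θ - θk| := hglip k θ θk
    have hfx : g k θk = θk := (hcontr k).fixedPoint_isFixedPt
    rw [hfx] at h1
    have h2 : t ≤ |θ - θk| := hfar k
    have h3 : |θ - θk| ≤ |θ - g k θ| + |g k θ - θk| := abs_sub_le θ (g k θ) θk
    have h4 : |g k θ - θ| = |θ - g k θ| := abs_sub_comm _ _
    rw [hj, h4]
    nlinarith [abs_nonneg (θ - θk)]
  have := resolvent_bound (hherm θ) θ ((1 - L) * t) hδ hkey
  rw [one_div]
  exact this
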